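/- Define f(p) = (1 − 2^{−p}) ζ(p) − 2^{p−1} (1/2 + 1/(2^p − 1)) for p > 1. Then f is strictly decreasing on (1, ∞), there is a unique μ ∈ (1, ∞) with f(μ) = 0, f(p) > 0 for 1 < p < μ, and f(p) < 0 for p > μ. -/

import Mathlib

open Finset Real Filter

/-- The n×n Cauchy–Toeplitz matrix `T_n = [2/(1+2(i-j))]`. -/
noncomputable def cauchyToeplitz (n : ℕ) : Matrix (Fin n) (Fin n) ℝ :=
  fun i j => 2 / (1 + 2 * (((i : ℕ) : ℝ) - ((j : ℕ) : ℝ)))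

/-- The ℓ_p norm of `T_n`: `(∑_{i,j} |a_{ij}|^p)^(1/p)`. -/
noncomputable def lpNorm (n : ℕ) (p : ℝ) : ℝ :=
  (∑ i : Fin n, ∑ j : Fin n, |cauchyToeplitz n i j| ^ p) ^ (1 / p)

/-- The ℓ_{p,q} norm of `T_n`: `(∑_j (∑_i |a_{ij}|^p)^(q/p))^(1/q)`. -/
noncomputable def lpqNorm (n : ℕ) (p q : ℝ) : ℝ :=
  (∑ j : Fin n, (∑ i : Fin n, |cauchyToeplitz n i j| ^ p) ^ (q / p)) ^ (1 / q)

/-- The Riemann zeta function at a real argument (real-valued for real `p > 1`). -/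
noncomputable def zetaR (p : ℝ) : ℝ := (riemannZeta p).re

noncomputable def f (p : ℝ) : ℝ :=
  (1 - 2 ^ (-p)) * zetaR p - 2 ^ (p - 1) * (1 / 2 + 1 / (2 ^ p - 1))

lemma summable_aux {p c : ℝ} (hp : 1 < p) (hc : 1 ≤ c) :
    Summable (fun k : ℕ => (2*(k:ℝ)+c) ^ (-p)) := by
  have hbase : Summable (fun n : ℕ => ((n:ℝ)+1) ^ (-p)) := by
    have h0 : Summable (fun n : ℕ => ((n:ℝ) ^ p)⁻¹) := Real.summable_nat_rpow_inv.2 hp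
    have h1 : Summable (fun n : ℕ => ((n:ℝ)) ^ (-p)) := by
      simpa [Real.rpow_neg (Nat.cast_nonneg _)] using h0
    have := (summable_nat_add_iff 1).2 h1
    simpa using this
  refine hbase.of_nonneg_of_le (fun k => Real.rpow_nonneg (by positivity) _) (fun k => ?_)
  exact Real.rpow_le_rpow_of_nonpos (by positivity) (by linarith) (by linarith)

lemma zetaR_eq {p : ℝ} (hp : 1 < p) :
    zetaR p = ∑' n : ℕ, ((n:ℝ)+1) ^ (-p) := by
  have hre : 1 < (p:ℂ).re := by simpa using hp
  have h := zeta_eq_tsum_one_div_nat_add_one_cpow hre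
  have hterm : ∀ n : ℕ, (1 / ((n:ℂ) + 1) ^ (p:ℂ)) = ((((n:ℝ)+1) ^ (-p) : ℝ) : ℂ) := by
    intro n
    have hnn : (0:ℝ) ≤ (n:ℝ)+1 := by positivity
    rw [Real.rpow_neg hnn, Complex.ofReal_inv, Complex.ofReal_cpow hnn]
    push_cast
    ring
  rw [zetaR, h]
  rw [tsum_congr hterm, ← Complex.ofReal_tsum]
  simp


lemma summable_base {p : ℝ} (hp : 1 < p) :
    Summable (fun n : ℕ => ((n:ℝ)+1) ^ (-p)) := by
  have h0 : Summable (fun n : ℕ => ((n:ℝ) ^ p)⁻¹) := Real.summable_nat_rpow_inv.2 hp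
  have h1 : Summable (fun n : ℕ => ((n:ℝ)) ^ (-p)) := by
    simpa [Real.rpow_neg (Nat.cast_nonneg _)] using h0
  have := (summable_nat_add_iff 1).2 h1
  simpa using this

lemma odd_sum_eq {p : ℝ} (hp : 1 < p) :
    (1 - (2:ℝ) ^ (-p)) * zetaR p = ∑' k : ℕ, (2*(k:ℝ)+1) ^ (-p) := by
  set a : ℕ → ℝ := fun n => ((n:ℝ)+1) ^ (-p) with ha
  have he : Summable (fun k : ℕ => a (2*k)) := by
    have := summable_aux hp (le_refl 1)
    refine this.congr fun k => ?_
    simp only [ha]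
    congr 1
    push_cast; ring
  have ho : Summable (fun k : ℕ => a (2*k+1)) := by
    have := summable_aux hp (by norm_num : (1:ℝ) ≤ 2)
    refine this.congr fun k => ?_
    simp only [ha]
    congr 1
    push_cast; ring
  have hsplit := tsum_even_add_odd he ho
  have hodd : (∑' k : ℕ, a (2*k+1)) = (2:ℝ)^(-p) * zetaR p := by
    have hterm : ∀ k : ℕ, a (2*k+1) = (2:ℝ)^(-p) * (((k:ℝ)+1) ^ (-p)) := by
      intro k
      have : ((2*k+1:ℕ):ℝ) + 1 = 2 * ((k:ℝ)+1) := by push_cast; ring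
      rw [ha]; simp only []
      rw [this, Real.mul_rpow (by norm_num) (by positivity)]
    rw [tsum_congr hterm, tsum_mul_left, ← zetaR_eq hp]
  have hz : (∑' n : ℕ, a n) = zetaR p := (zetaR_eq hp).symm
  have : (∑' k : ℕ, a (2*k)) = zetaR p - (2:ℝ)^(-p) * zetaR p := by
    rw [hodd, hz] at hsplit; linarith
  rw [sub_mul, one_mul, ← this]
  refine tsum_congr fun k => ?_
  simp only [ha]
  congr 1
  push_cast; ring

noncomputable def gg (p : ℝ) : ℝ :=
  1 + (3:ℝ)^(-p) + (5:ℝ)^(-p) + (7:ℝ)^(-p) + (9:ℝ)^(-p)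
    - (2:ℝ)^(p-2) - (2:ℝ)^(p-1)/((2:ℝ)^p-1)

noncomputable def UU (p : ℝ) : ℝ := ∑' k : ℕ, (2*(k:ℝ)+11) ^ (-p)

lemma two_rpow_gt_one {p : ℝ} (hp : 1 < p) : 1 < (2:ℝ)^p := by
  have := Real.rpow_lt_rpow_of_exponent_lt (by norm_num : (1:ℝ) < 2) (by linarith : (0:ℝ) < p)
  simpa using this

lemma f_eq {p : ℝ} (hp : 1 < p) : f p = gg p + UU p := by
  have hodd := odd_sum_eq hp
  have hsum : Summable (fun k : ℕ => (2*(k:ℝ)+1)^(-p)) := summable_aux hp le_rfl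
  have hpeel := Summable.sum_add_tsum_nat_add 5 hsum
  have htail : (∑' i : ℕ, (2*((i+5:ℕ):ℝ)+1)^(-p)) = UU p := by
    refine tsum_congr fun k => ?_
    congr 1
    push_cast; ring
  have hhead : (∑ i ∈ range 5, (2*((i:ℕ):ℝ)+1)^(-p))
      = 1 + (3:ℝ)^(-p) + (5:ℝ)^(-p) + (7:ℝ)^(-p) + (9:ℝ)^(-p) := by
    rw [Finset.sum_range_succ, Finset.sum_range_succ, Finset.sum_range_succ,
      Finset.sum_range_succ, Finset.sum_range_one]
    norm_num [Real.one_rpow]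
  have hS : (∑' k : ℕ, (2*(k:ℝ)+1)^(-p))
      = 1 + (3:ℝ)^(-p) + (5:ℝ)^(-p) + (7:ℝ)^(-p) + (9:ℝ)^(-p) + UU p := by
    rw [← hpeel, htail, hhead]
  have h2p : (1:ℝ) < (2:ℝ)^p := two_rpow_gt_one hp
  have hhalf : (2:ℝ)^(p-1) * (1/2) = (2:ℝ)^(p-2) := by
    have h4 : (2:ℝ)^(2:ℝ) = 4 := by
      rw [show ((2:ℝ):ℝ) = ((2:ℕ):ℝ) by norm_num, Real.rpow_natCast]; norm_num
    rw [Real.rpow_sub (by norm_num : (0:ℝ) < 2), Real.rpow_sub (by norm_num : (0:ℝ) < 2),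
      Real.rpow_one, h4]
    ring
  have : f p = (1 - 2 ^ (-p)) * zetaR p - ((2:ℝ)^(p-2) + (2:ℝ)^(p-1)/((2:ℝ)^p-1)) := by
    rw [f, mul_add, hhalf]
    ring
  rw [this, hodd, hS, gg]
  ring

lemma rpow_32_le {b c : ℝ} (hb : 0 ≤ b) (hc : 0 ≤ c) (h : b^(3:ℕ) ≤ c^(2:ℕ)) :
    b ^ ((3:ℝ)/2) ≤ c := by
  have ha : 0 ≤ b ^ ((3:ℝ)/2) := Real.rpow_nonneg hb _
  have hsq : (b ^ ((3:ℝ)/2))^(2:ℕ) = b^(3:ℕ) := by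
    rw [← Real.rpow_natCast (b ^ ((3:ℝ)/2)) 2, ← Real.rpow_mul hb, ← Real.rpow_natCast b 3]
    norm_num
  nlinarith [sq_nonneg (b ^ ((3:ℝ)/2) - c), sq_nonneg (b ^ ((3:ℝ)/2) + c)]

lemma le_rpow_32 {b c : ℝ} (hb : 0 ≤ b) (hc : 0 ≤ c) (h : c^(2:ℕ) ≤ b^(3:ℕ)) :
    c ≤ b ^ ((3:ℝ)/2) := by
  have ha : 0 ≤ b ^ ((3:ℝ)/2) := Real.rpow_nonneg hb _
  have hsq : (b ^ ((3:ℝ)/2))^(2:ℕ) = b^(3:ℕ) := by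
    rw [← Real.rpow_natCast (b ^ ((3:ℝ)/2)) 2, ← Real.rpow_mul hb, ← Real.rpow_natCast b 3]
    norm_num
  nlinarith [sq_nonneg (b ^ ((3:ℝ)/2) - c), sq_nonneg (b ^ ((3:ℝ)/2) + c)]

lemma rpow_neg_lower {b e c x : ℝ} (hb : 1 ≤ b) (hbe : b ^ e ≤ c) (hc : 0 < c)
    (hx : x ≤ e) : c⁻¹ ≤ b ^ (-x) := by
  have h1 : b ^ (-e) ≤ b ^ (-x) :=
    Real.rpow_le_rpow_of_exponent_le hb (by linarith)
  have hbe0 : 0 < b ^ e := Real.rpow_pos_of_pos (by linarith) _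
  have h2 : c⁻¹ ≤ (b ^ e)⁻¹ := by
    exact inv_anti₀ hbe0 hbe
  rw [Real.rpow_neg (by linarith)] at h1
  linarith

noncomputable def D (x : ℝ) : ℝ :=
  -(Real.log 3 * (3:ℝ)^(-x)) - Real.log 5 * (5:ℝ)^(-x) - Real.log 7 * (7:ℝ)^(-x)
    - Real.log 9 * (9:ℝ)^(-x) - Real.log 2 * (2:ℝ)^(x-2)
    + Real.log 2 * (2:ℝ)^(x-1) / ((2:ℝ)^x - 1)^2

lemma hasDerivAt_gg {x : ℝ} (h2 : (2:ℝ)^x - 1 ≠ 0) : HasDerivAt gg (D x) x := by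
  have cneg : HasDerivAt (fun y : ℝ => -y) (-1) x := (hasDerivAt_id x).neg
  have c3 : HasDerivAt (fun y : ℝ => (3:ℝ)^(-y)) (-(Real.log 3 * (3:ℝ)^(-x))) x := by
    have h := ((Real.hasStrictDerivAt_const_rpow (by norm_num : (0:ℝ) < 3) (-x)).hasDerivAt).comp
      x cneg
    exact h.congr_deriv (by ring)
  have c5 : HasDerivAt (fun y : ℝ => (5:ℝ)^(-y)) (-(Real.log 5 * (5:ℝ)^(-x))) x := by
    have h := ((Real.hasStrictDerivAt_const_rpow (by norm_num : (0:ℝ) < 5) (-x)).hasDerivAt).comp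
      x cneg
    exact h.congr_deriv (by ring)
  have c7 : HasDerivAt (fun y : ℝ => (7:ℝ)^(-y)) (-(Real.log 7 * (7:ℝ)^(-x))) x := by
    have h := ((Real.hasStrictDerivAt_const_rpow (by norm_num : (0:ℝ) < 7) (-x)).hasDerivAt).comp
      x cneg
    exact h.congr_deriv (by ring)
  have c9 : HasDerivAt (fun y : ℝ => (9:ℝ)^(-y)) (-(Real.log 9 * (9:ℝ)^(-x))) x := by
    have h := ((Real.hasStrictDerivAt_const_rpow (by norm_num : (0:ℝ) < 9) (-x)).hasDerivAt).comp
      x cneg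
    exact h.congr_deriv (by ring)
  have csub2 : HasDerivAt (fun y : ℝ => y - 2) 1 x := (hasDerivAt_id x).sub_const 2
  have csub1 : HasDerivAt (fun y : ℝ => y - 1) 1 x := (hasDerivAt_id x).sub_const 1
  have c2a : HasDerivAt (fun y : ℝ => (2:ℝ)^(y-2)) (Real.log 2 * (2:ℝ)^(x-2)) x := by
    have h := ((Real.hasStrictDerivAt_const_rpow (by norm_num : (0:ℝ) < 2) (x-2)).hasDerivAt).comp
      x csub2
    exact h.congr_deriv (by ring)
  have cu : HasDerivAt (fun y : ℝ => (2:ℝ)^(y-1)) (Real.log 2 * (2:ℝ)^(x-1)) x := by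
    have h := ((Real.hasStrictDerivAt_const_rpow (by norm_num : (0:ℝ) < 2) (x-1)).hasDerivAt).comp
      x csub1
    exact h.congr_deriv (by ring)
  have cv : HasDerivAt (fun y : ℝ => (2:ℝ)^y - 1) (Real.log 2 * (2:ℝ)^x) x := by
    have h := ((Real.hasStrictDerivAt_const_rpow (by norm_num : (0:ℝ) < 2) x).hasDerivAt).sub_const 1
    exact h.congr_deriv (by ring)
  have cq : HasDerivAt (fun y : ℝ => (2:ℝ)^(y-1) / ((2:ℝ)^y - 1))
      ((Real.log 2 * (2:ℝ)^(x-1) * ((2:ℝ)^x - 1) - (2:ℝ)^(x-1) * (Real.log 2 * (2:ℝ)^x))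
        / ((2:ℝ)^x - 1)^2) x := cu.div cv h2
  have hgg : HasDerivAt gg
      ((0 + -(Real.log 3 * (3:ℝ)^(-x)) + -(Real.log 5 * (5:ℝ)^(-x)) + -(Real.log 7 * (7:ℝ)^(-x))
        + -(Real.log 9 * (9:ℝ)^(-x)) - Real.log 2 * (2:ℝ)^(x-2))
        - ((Real.log 2 * (2:ℝ)^(x-1) * ((2:ℝ)^x - 1) - (2:ℝ)^(x-1) * (Real.log 2 * (2:ℝ)^x))
        / ((2:ℝ)^x - 1)^2)) x := by
    exact ((((((hasDerivAt_const x (1:ℝ)).add c3).add c5).add c7).add c9).sub c2a).sub cq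
  convert hgg using 1
  rw [D]
  have hx2 : ((2:ℝ)^x - 1)^2 ≠ 0 := pow_ne_zero 2 h2
  field_simp
  ring

lemma log_facts :
    0 < Real.log 2 ∧ 3 * Real.log 2 ≤ 2 * Real.log 3 ∧ 2 * Real.log 2 ≤ Real.log 5
      ∧ 2 * Real.log 2 ≤ Real.log 7 ∧ 3 * Real.log 2 ≤ Real.log 9 := by
  have h2 : (0:ℝ) < Real.log 2 := Real.log_pos (by norm_num)
  have h89 : Real.log 8 ≤ Real.log 9 := Real.log_le_log (by norm_num) (by norm_num)
  have h45 : Real.log 4 ≤ Real.log 5 := Real.log_le_log (by norm_num) (by norm_num)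
  have h47 : Real.log 4 ≤ Real.log 7 := Real.log_le_log (by norm_num) (by norm_num)
  have e8 : Real.log 8 = 3 * Real.log 2 := by
    rw [show (8:ℝ) = 2^(3:ℕ) by norm_num, Real.log_pow]; push_cast; ring
  have e9 : Real.log 9 = 2 * Real.log 3 := by
    rw [show (9:ℝ) = 3^(2:ℕ) by norm_num, Real.log_pow]; push_cast; ring
  have e4 : Real.log 4 = 2 * Real.log 2 := by
    rw [show (4:ℝ) = 2^(2:ℕ) by norm_num, Real.log_pow]; push_cast; ring
  rw [e8, e9] at h89
  rw [e4] at h45 h47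
  exact ⟨h2, by linarith, h45, h47, by rw [e9]; linarith⟩

set_option maxHeartbeats 1000000 in
lemma D_neg {x : ℝ} (hx : 1 < x) : D x < 0 := by
  obtain ⟨h2, h3, h5, h7, h9⟩ := log_facts
  have hA : (0:ℝ) < (2:ℝ)^(x-1) := Real.rpow_pos_of_pos (by norm_num) _
  have h2x : (2:ℝ)^x = 2 * (2:ℝ)^(x-1) := by
    rw [show x = (x-1) + 1 by ring, Real.rpow_add (by norm_num : (0:ℝ) < 2), Real.rpow_one]
    ring_nf
  have hx2 : (2:ℝ)^(x-2) = (2:ℝ)^(x-1) / 2 := by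
    rw [show x - 2 = (x-1) - 1 by ring, Real.rpow_sub (by norm_num : (0:ℝ) < 2), Real.rpow_one]
  have hA1 : (1:ℝ) < (2:ℝ)^(x-1) := by
    have := Real.rpow_lt_rpow_of_exponent_lt (by norm_num : (1:ℝ) < 2)
      (by linarith : (0:ℝ) < x - 1)
    simpa using this
  set A := (2:ℝ)^(x-1) with hAdef
  set B := (2:ℝ)^x - 1 with hBdef
  have hB : B = 2*A - 1 := by rw [hBdef, h2x]
  have hBpos : 0 < B := by rw [hB]; linarith
  have hterm3 : 0 < Real.log 3 * (3:ℝ)^(-x) := by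
    have : (0:ℝ) < Real.log 3 := Real.log_pos (by norm_num)
    positivity
  have hterm5 : 0 < Real.log 5 * (5:ℝ)^(-x) := by
    have : (0:ℝ) < Real.log 5 := Real.log_pos (by norm_num)
    positivity
  have hterm7 : 0 < Real.log 7 * (7:ℝ)^(-x) := by
    have : (0:ℝ) < Real.log 7 := Real.log_pos (by norm_num)
    positivity
  have hterm9 : 0 < Real.log 9 * (9:ℝ)^(-x) := by
    have : (0:ℝ) < Real.log 9 := Real.log_pos (by norm_num)
    positivity
  rw [D, hx2]
  rcases le_or_gt ((3:ℝ)/2) x with hge | hlt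
  · have h32 : (5:ℝ)/2 ≤ (2:ℝ)^((3:ℝ)/2) := le_rpow_32 (by norm_num) (by norm_num) (by norm_num)
    have h2x32 : (2:ℝ)^((3:ℝ)/2) ≤ (2:ℝ)^x := Real.rpow_le_rpow_of_exponent_le (by norm_num) hge
    have hBge : (3:ℝ)/2 ≤ B := by rw [hBdef]; linarith
    have hB2 : (9:ℝ)/4 ≤ B^2 := by nlinarith
    have hq : Real.log 2 * A / B^2 ≤ (4/9) * (Real.log 2 * A) := by
      rw [div_le_iff₀ (by positivity)]
      nlinarith [mul_le_mul_of_nonneg_left hB2 (le_of_lt (mul_pos h2 hA))]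
    nlinarith [mul_pos h2 hA]
  · have hB1 : (1:ℝ) < B := by rw [hB]; linarith
    have hBA : A < B := by rw [hB]; linarith
    have hAB2 : A < B^2 := by nlinarith [mul_lt_mul_of_pos_left hB1 hBpos]
    have hq : Real.log 2 * A / B^2 < Real.log 2 := by
      rw [div_lt_iff₀ (by positivity)]
      exact mul_lt_mul_of_pos_left hAB2 h2
    have hb2 : (1:ℝ)/2 * Real.log 2 ≤ Real.log 2 * (A/2) := by nlinarith
    have l3 : (4:ℝ)/21 ≤ (3:ℝ)^(-x) := by
      have hb : (3:ℝ)^((3:ℝ)/2) ≤ 21/4 := rpow_32_le (by norm_num) (by norm_num) (by norm_num)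
      have h := rpow_neg_lower (by norm_num : (1:ℝ) ≤ 3) hb (by norm_num) hlt.le
      norm_num at h; linarith
    have l5 : (2:ℝ)/23 ≤ (5:ℝ)^(-x) := by
      have hb : (5:ℝ)^((3:ℝ)/2) ≤ 23/2 := rpow_32_le (by norm_num) (by norm_num) (by norm_num)
      have h := rpow_neg_lower (by norm_num : (1:ℝ) ≤ 5) hb (by norm_num) hlt.le
      norm_num at h; linarith
    have l7 : (1:ℝ)/19 ≤ (7:ℝ)^(-x) := by
      have hb : (7:ℝ)^((3:ℝ)/2) ≤ 19 := rpow_32_le (by norm_num) (by norm_num) (by norm_num)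
      have h := rpow_neg_lower (by norm_num : (1:ℝ) ≤ 7) hb (by norm_num) hlt.le
      norm_num at h; linarith
    have l9 : (1:ℝ)/27 ≤ (9:ℝ)^(-x) := by
      have hb : (9:ℝ)^((3:ℝ)/2) ≤ 27 := rpow_32_le (by norm_num) (by norm_num) (by norm_num)
      have h := rpow_neg_lower (by norm_num : (1:ℝ) ≤ 9) hb (by norm_num) hlt.le
      norm_num at h; linarith
    have m3 : (2:ℝ)/7 * Real.log 2 ≤ Real.log 3 * (3:ℝ)^(-x) := by
      calc (2:ℝ)/7 * Real.log 2 = (3/2 * Real.log 2) * (4/21) := by ring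
        _ ≤ Real.log 3 * (3:ℝ)^(-x) :=
          mul_le_mul (by linarith) l3 (by norm_num) (Real.log_nonneg (by norm_num))
    have m5 : (4:ℝ)/23 * Real.log 2 ≤ Real.log 5 * (5:ℝ)^(-x) := by
      calc (4:ℝ)/23 * Real.log 2 = (2 * Real.log 2) * (2/23) := by ring
        _ ≤ Real.log 5 * (5:ℝ)^(-x) :=
          mul_le_mul (by linarith) l5 (by norm_num) (Real.log_nonneg (by norm_num))
    have m7 : (2:ℝ)/19 * Real.log 2 ≤ Real.log 7 * (7:ℝ)^(-x) := by
      calc (2:ℝ)/19 * Real.log 2 = (2 * Real.log 2) * (1/19) := by ring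
        _ ≤ Real.log 7 * (7:ℝ)^(-x) :=
          mul_le_mul (by linarith) l7 (by norm_num) (Real.log_nonneg (by norm_num))
    have m9 : (1:ℝ)/9 * Real.log 2 ≤ Real.log 9 * (9:ℝ)^(-x) := by
      calc (1:ℝ)/9 * Real.log 2 = (3 * Real.log 2) * (1/27) := by ring
        _ ≤ Real.log 9 * (9:ℝ)^(-x) :=
          mul_le_mul (by linarith) l9 (by norm_num) (Real.log_nonneg (by norm_num))
    linarith

lemma two_rpow_ne {x : ℝ} (hx : 0 < x) : (2:ℝ)^x - 1 ≠ 0 := by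
  have h := Real.rpow_lt_rpow_of_exponent_lt (by norm_num : (1:ℝ) < 2) hx
  rw [Real.rpow_zero] at h
  linarith

lemma strictAntiOn_gg : StrictAntiOn gg (Set.Ioi 1) := by
  refine strictAntiOn_of_deriv_neg (convex_Ioi 1) ?_ ?_
  · intro x hx
    have hx1 : (1:ℝ) < x := hx
    exact (hasDerivAt_gg (two_rpow_ne (by linarith))).continuousAt.continuousWithinAt
  · intro x hx
    rw [interior_Ioi] at hx
    have hx1 : (1:ℝ) < x := hx
    rw [(hasDerivAt_gg (two_rpow_ne (by linarith))).deriv]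
    exact D_neg hx1

lemma UU_nonneg (p : ℝ) : 0 ≤ UU p :=
  tsum_nonneg fun k => Real.rpow_nonneg (by positivity) _

lemma UU_anti {p q : ℝ} (hp : 1 < p) (hpq : p ≤ q) : UU q ≤ UU p := by
  refine Summable.tsum_le_tsum (fun k => ?_) (summable_aux (lt_of_lt_of_le hp hpq) (by norm_num))
    (summable_aux hp (by norm_num))
  refine Real.rpow_le_rpow_of_exponent_le ?_ (by linarith)
  have : (0:ℝ) ≤ (k:ℝ) := Nat.cast_nonneg k
  linarith

lemma f_anti : StrictAntiOn f (Set.Ioi 1) := by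
  intro p hp q hq hpq
  have hp1 : (1:ℝ) < p := hp
  have hq1 : (1:ℝ) < q := hq
  rw [f_eq hp1, f_eq hq1]
  have h1 := strictAntiOn_gg hp hq hpq
  have h2 := UU_anti hp1 hpq.le
  linarith

lemma gg_one_pos : 0 < gg 1 := by
  rw [gg]
  norm_num [Real.rpow_neg_one, Real.rpow_zero, Real.rpow_one,
    show (1:ℝ) - 2 = -1 by norm_num, show (1:ℝ) - 1 = 0 by norm_num]

lemma rpw (b : ℝ) (n : ℤ) {x : ℝ} (h : x = (n:ℝ)) : b ^ x = b ^ n := by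
  rw [h, Real.rpow_intCast]

lemma gg_four : gg 4 ≤ -(7:ℝ)/2 := by
  rw [gg, rpw 3 (-4) (by norm_num), rpw 5 (-4) (by norm_num), rpw 7 (-4) (by norm_num),
    rpw 9 (-4) (by norm_num), rpw 2 2 (by norm_num : (4:ℝ)-2 = ((2:ℤ):ℝ)),
    rpw 2 3 (by norm_num : (4:ℝ)-1 = ((3:ℤ):ℝ)), rpw 2 4 (by norm_num : (4:ℝ) = ((4:ℤ):ℝ))]
  norm_num

lemma UU_four : UU 4 ≤ 2 := by
  have hz2 : HasSum (fun n : ℕ => (1:ℝ) / (n:ℝ)^2) (π^2/6) := hasSum_zeta_two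
  have hf2 : Summable (fun k : ℕ => (1:ℝ)/((k:ℝ)+1)^2) := by
    have := (summable_nat_add_iff 1).2 hz2.summable
    refine this.congr fun k => ?_
    push_cast
    ring
  have hle2 : (∑' k : ℕ, (1:ℝ)/((k:ℝ)+1)^2) ≤ π^2/6 := by
    rw [← hz2.tsum_eq]
    refine Summable.tsum_le_tsum_of_inj (fun k => k+1) (add_left_injective 1)
      (fun c _ => by positivity) (fun k => le_of_eq (by push_cast; ring)) hf2 hz2.summable
  have hterm : ∀ k : ℕ, (2*(k:ℝ)+11)^(-(4:ℝ)) ≤ (1:ℝ) / ((k:ℝ)+1)^2 := by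
    intro k
    have hk : (0:ℝ) ≤ (k:ℝ) := Nat.cast_nonneg k
    have h1 : (2*(k:ℝ)+11)^(-(4:ℝ)) = ((2*(k:ℝ)+11)^(4:ℕ))⁻¹ := by
      rw [show (4:ℝ) = ((4:ℕ):ℝ) by norm_num, Real.rpow_neg (by positivity),
        Real.rpow_natCast]
    rw [h1, one_div]
    refine inv_anti₀ (by positivity) ?_
    nlinarith
  have hUle : UU 4 ≤ ∑' k : ℕ, (1:ℝ) / ((k:ℝ)+1)^2 :=
    Summable.tsum_le_tsum hterm (summable_aux (by norm_num) (by norm_num)) hf2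
  have hpi : π^2/6 ≤ 2 := by
    have h1 : π < 3.15 := Real.pi_lt_d2
    have h2 : 0 < π := Real.pi_pos
    nlinarith
  linarith

lemma f_four_neg : f 4 < 0 := by
  rw [f_eq (by norm_num : (1:ℝ) < 4)]
  have := UU_four
  have := gg_four
  linarith

open Topology in
lemma exists_pos_point : ∃ a : ℝ, a ∈ Set.Ioo (1:ℝ) 4 ∧ 0 < f a := by
  have hc : ContinuousAt gg 1 := by
    refine (hasDerivAt_gg ?_).continuousAt
    exact two_rpow_ne (by norm_num)
  have hev1 : ∀ᶠ x in 𝓝 (1:ℝ), 0 < gg x := hc.eventually (eventually_gt_nhds gg_one_pos)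
  have hev2 : ∀ᶠ x in 𝓝 (1:ℝ), x < 4 := eventually_lt_nhds (by norm_num)
  have hev : ∀ᶠ x in 𝓝[>] (1:ℝ), (0 < gg x ∧ x < 4) :=
    (hev1.and hev2).filter_mono nhdsWithin_le_nhds
  have hmem : ∀ᶠ x in 𝓝[>] (1:ℝ), 1 < x := eventually_mem_nhdsWithin
  obtain ⟨a, ⟨hga, ha4⟩, ha1⟩ := (hev.and hmem).exists
  refine ⟨a, ⟨ha1, ha4⟩, ?_⟩
  rw [f_eq ha1]
  have := UU_nonneg a
  linarith

lemma f_contOn : ContinuousOn f (Set.Ioi 1) := by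
  intro x hx
  have hx1 : (1:ℝ) < x := hx
  have hne : (2:ℝ)^x - 1 ≠ 0 := two_rpow_ne (by linarith)
  have hzC : ContinuousAt zetaR x := by
    have h1 : ContinuousAt (fun p : ℝ => ((p:ℂ))) x := Complex.continuous_ofReal.continuousAt
    have h2 : DifferentiableAt ℂ riemannZeta (x:ℂ) := by
      refine differentiableAt_riemannZeta ?_
      intro h
      rw [show (1:ℂ) = ((1:ℝ):ℂ) by norm_num] at h
      exact (by linarith : x ≠ 1) (Complex.ofReal_injective h)
    exact Complex.continuous_re.continuousAt.comp (h2.continuousAt.comp h1)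
  have hneg : ContinuousAt (fun p : ℝ => (2:ℝ)^(-p)) x :=
    (Real.continuousAt_const_rpow (by norm_num : (2:ℝ) ≠ 0)).comp continuous_neg.continuousAt
  have hp1 : ContinuousAt (fun p : ℝ => (2:ℝ)^(p-1)) x :=
    (Real.continuousAt_const_rpow (by norm_num : (2:ℝ) ≠ 0)).comp
      (continuous_id.sub continuous_const).continuousAt
  have hp0 : ContinuousAt (fun p : ℝ => (2:ℝ)^p) x :=
    (Real.continuousAt_const_rpow (by norm_num : (2:ℝ) ≠ 0)).comp continuous_id.continuousAt
  have : ContinuousAt f x := by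
    refine ContinuousAt.sub ?_ ?_
    · exact (continuousAt_const.sub hneg).mul hzC
    · refine hp1.mul (ContinuousAt.add continuousAt_const ?_)
      exact continuousAt_const.div (hp0.sub continuousAt_const) hne
  exact this.continuousWithinAt

theorem stmt_6 :
    StrictAntiOn f (Set.Ioi 1) ∧
    (∃! μ : ℝ, μ ∈ Set.Ioi (1 : ℝ) ∧ f μ = 0) ∧
    ∀ μ : ℝ, μ ∈ Set.Ioi (1 : ℝ) → f μ = 0 →
      (∀ p : ℝ, 1 < p → p < μ → 0 < f p) ∧
      (∀ p : ℝ, μ < p → f p < 0) := by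
  have hanti := f_anti
  obtain ⟨a, ⟨ha1, ha4⟩, hfa⟩ := exists_pos_point
  have hf4 := f_four_neg
  have hIcc : Set.Icc a 4 ⊆ Set.Ioi 1 := fun x hx => lt_of_lt_of_le ha1 hx.1
  have hivt := intermediate_value_Ioo' (le_of_lt ha4) (f_contOn.mono hIcc)
  have h0mem : (0:ℝ) ∈ Set.Ioo (f 4) (f a) := ⟨hf4, hfa⟩
  obtain ⟨μ, hμmem, hμ0⟩ := hivt h0mem
  have hμ1 : μ ∈ Set.Ioi (1:ℝ) := lt_trans ha1 hμmem.1
  refine ⟨hanti, ⟨μ, ⟨hμ1, hμ0⟩, ?_⟩, ?_⟩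
  · rintro y ⟨hy1, hy0⟩
    rcases lt_trichotomy y μ with h | h | h
    · have := hanti hy1 hμ1 h
      rw [hy0, hμ0] at this
      exact absurd this (lt_irrefl 0)
    · exact h
    · have := hanti hμ1 hy1 h
      rw [hy0, hμ0] at this
      exact absurd this (lt_irrefl 0)
  · intro ν hν1 hν0
    constructor
    · intro p hp hpν
      have := hanti (by exact hp : p ∈ Set.Ioi 1) hν1 hpν
      rw [hν0] at this
      linarith
    · intro p hνp
      have hp1 : p ∈ Set.Ioi (1:ℝ) := lt_trans hν1 hνp
      have := hanti hν1 hp1 hνp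
      rw [hν0] at this
      linarith
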